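/- Let E ∈ ℝ^{n×n} be symmetric, F, H ∈ ℝ^{m×n}, G ∈ ℝ^{m×m} symmetric, q ∈ ℝⁿ, r ∈ ℝᵐ, and let û ∈ ℝⁿ, p̂ ∈ ℝᵐ. Fix positive weights α₁, α₂, α₃, α₄, β₁, β₂. Set Q = q − Eû − Fᵀp̂, R = r − Hû − Gp̂, N₁ = J_S^n Φ_E D_{S,n}⁻¹, S₁ = J_S^m Φ_G D_{S,m}⁻¹. Define M₁^R = [α₁⁻¹(ûᵀ⊗Iₙ)N₁, α₂⁻¹(Iₙ⊗p̂ᵀ)Σ_F, 0_{n×mn}, 0_{n×m(m+1)/2}], M₂^R = [0_{m×n(n+1)/2}, 0_{m×mn}, α₃⁻¹(ûᵀ⊗I_m)Σ_H, α₄⁻¹(p̂ᵀ⊗I_m)S₁], Ĩ₁ = [−β₁⁻¹Iₙ, 0_{n×m}], Ĩ₂ = [0_{m×n}, −β₂⁻¹I_m], and M = [[M₁^R, Ĩ₁],[M₂^R, Ĩ₂]]. Then MMᵀ is invertible, and the sparsity-preserving structured backward error inf{ ζ^{σ₂}(ΔE⊙Θ_E, ΔF⊙Θ_F, ΔH⊙Θ_H,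 ΔG⊙Θ_G, Δq, Δr) : ΔE ∈ ℝ^{n×n} symmetric, ΔF, ΔH ∈ ℝ^{m×n}, ΔG ∈ ℝ^{m×m} symmetric, Δq ∈ ℝⁿ, Δr ∈ ℝᵐ, (E+ΔE⊙Θ_E)û + (F+ΔF⊙Θ_F)ᵀp̂ = q+Δq and (H+ΔH⊙Θ_H)û + (G+ΔG⊙Θ_G)p̂ = r+Δr } is attained and equals ‖Mᵀ(MMᵀ)⁻¹[Q; R]‖₂. -/

import Mathlib

open Matrix

noncomputable section

namespace GSPPBE

/-- Entrywise real part of a complex matrix. -/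
def reM {I J : Type*} (A : Matrix I J ℂ) : Matrix I J ℝ := A.map Complex.re

/-- Entrywise imaginary part of a complex matrix. -/
def imM {I J : Type*} (A : Matrix I J ℂ) : Matrix I J ℝ := A.map Complex.im

/-- Entrywise real part of a complex vector. -/
def reV {I : Type*} (v : I → ℂ) : I → ℝ := fun i => (v i).re

/-- Entrywise imaginary part of a complex vector. -/
def imV {I : Type*} (v : I → ℂ) : I → ℝ := fun i => (v i).im

/-- Frobenius norm of a matrix. -/
def frob {I J α : Type*} [Fintype I] [Fintype J] [SeminormedAddGroup α]
    (A : Matrix I J α) : ℝ :=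
  Real.sqrt (∑ i, ∑ j, ‖A i j‖ ^ 2)

/-- Euclidean norm of a (finitely indexed) vector. -/
def eunorm {I α : Type*} [Fintype I] [SeminormedAddGroup α] (v : I → α) : ℝ :=
  Real.sqrt (∑ i, ‖v i‖ ^ 2)

/-- Column-major vectorization: `vecM A (j, i) = A i j`. -/
def vecM {I J α : Type*} (A : Matrix I J α) : J × I → α := fun p => A p.2 p.1

/-- Index type for the lower triangle including the diagonal (positions of `vec_S`);
it has `m(m+1)/2` elements. -/
abbrev SymIdx (m : ℕ) := {p : Fin m × Fin m // p.2 ≤ p.1}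

/-- Index type for the strictly lower triangle (positions of `vec_SK`);
it has `m(m-1)/2` elements. -/
abbrev SkewIdx (m : ℕ) := {p : Fin m × Fin m // p.2 < p.1}

/-- `vec_S` of a (symmetric) matrix: its lower-triangular entries `Z i j`, `j ≤ i`. -/
def vecS {m : ℕ} {α : Type*} (Z : Matrix (Fin m) (Fin m) α) : SymIdx m → α :=
  fun p => Z p.1.1 p.1.2

/-- `vec_SK` of a (skew-symmetric) matrix: its strictly lower-triangular entries `Z i j`, `j < i`. -/
def vecSK {m : ℕ} {α : Type*} (Z : Matrix (Fin m) (Fin m) α) : SkewIdx m → α :=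
  fun p => Z p.1.1 p.1.2

/-- `J_S^m`: its column at position `(i,j)`, `j ≤ i`, is `vec(eᵢeⱼᵀ + eⱼeᵢᵀ)` for `i > j` and
`vec(eⱼeⱼᵀ)` for `i = j`.  Rows are vec positions `(column, row)`. -/
def JS (m : ℕ) : Matrix (Fin m × Fin m) (SymIdx m) ℝ :=
  Matrix.of fun cr p =>
    (if cr.2 = p.1.1 ∧ cr.1 = p.1.2 then (1 : ℝ) else 0) +
    (if p.1.1 ≠ p.1.2 ∧ cr.2 = p.1.2 ∧ cr.1 = p.1.1 then 1 else 0)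

/-- `J_SK^m`: its column at position `(i,j)`, `j < i`, is `vec(eᵢeⱼᵀ − eⱼeᵢᵀ)`. -/
def JSK (m : ℕ) : Matrix (Fin m × Fin m) (SkewIdx m) ℝ :=
  Matrix.of fun cr p =>
    (if cr.2 = p.1.1 ∧ cr.1 = p.1.2 then (1 : ℝ) else 0) -
    (if cr.2 = p.1.2 ∧ cr.1 = p.1.1 then 1 else 0)

open Classical in
/-- Sign pattern `Θ_X` of a matrix, with values in the same ring. -/
def theta {I J α : Type*} [Zero α] [One α] (X : Matrix I J α) : Matrix I J α :=
  Matrix.of fun i j => if X i j = 0 then 0 else 1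

open Classical in
/-- Real-valued sign pattern `Θ_X` of a matrix. -/
def thetaR {I J α : Type*} [Zero α] (X : Matrix I J α) : Matrix I J ℝ :=
  Matrix.of fun i j => if X i j = 0 then 0 else 1

/-- `Φ_X = diag(vec_S(Θ_X))`. -/
def Phi {m : ℕ} {α : Type*} [Zero α] (X : Matrix (Fin m) (Fin m) α) :
    Matrix (SymIdx m) (SymIdx m) ℝ :=
  Matrix.diagonal (vecS (thetaR X))

/-- `Ψ_X`: diagonal matrix listing the strictly lower-triangular entries of `Θ_X`
in `vec_SK` ordering. -/
def Psi {m : ℕ} {α : Type*} [Zero α] (X : Matrix (Fin m) (Fin m) α) :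
    Matrix (SkewIdx m) (SkewIdx m) ℝ :=
  Matrix.diagonal (vecSK (thetaR X))

/-- `Σ_X = diag(vec(Θ_X))`. -/
def Sig {I J α : Type*} [DecidableEq I] [DecidableEq J] [Zero α]
    (X : Matrix I J α) : Matrix (J × I) (J × I) ℝ :=
  Matrix.diagonal (vecM (thetaR X))

/-- `D_{S,m}`: diagonal entry `1` at the positions of diagonal entries `(j,j)`, `√2` elsewhere. -/
def DS (m : ℕ) : Matrix (SymIdx m) (SymIdx m) ℝ :=
  Matrix.diagonal fun p => if p.1.1 = p.1.2 then 1 else Real.sqrt 2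

/-- `D_{SK,m} = √2·I`. -/
def DSK (m : ℕ) : Matrix (SkewIdx m) (SkewIdx m) ℝ :=
  Matrix.diagonal fun _ => Real.sqrt 2

/-- `uᵀ ⊗ I_b`, viewed as a matrix acting on column-major vectorizations of `b×a` matrices. -/
def rowKronId {a b : ℕ} (u : Fin a → ℝ) : Matrix (Fin b) (Fin a × Fin b) ℝ :=
  Matrix.of fun r p => u p.1 * (if r = p.2 then 1 else 0)

/-- `I_a ⊗ vᵀ`, viewed as a matrix acting on column-major vectorizations of `b×a` matrices. -/
def idKronRow {a b : ℕ} (v : Fin b → ℝ) : Matrix (Fin a) (Fin a × Fin b) ℝ :=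
  Matrix.of fun r p => (if r = p.1 then 1 else 0) * v p.2

/-- The weighted norm `ζ^{σ₁}(A,B,C,q,r)`. -/
def zeta1 {n m : ℕ} {α : Type*} [SeminormedAddGroup α]
    (α₁ α₂ α₃ β₁ β₂ : ℝ)
    (A : Matrix (Fin n) (Fin n) α) (B : Matrix (Fin m) (Fin n) α)
    (C : Matrix (Fin m) (Fin m) α) (q : Fin n → α) (r : Fin m → α) : ℝ :=
  Real.sqrt (α₁ ^ 2 * frob A ^ 2 + α₂ ^ 2 * frob B ^ 2 + α₃ ^ 2 * frob C ^ 2 +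
    β₁ ^ 2 * eunorm q ^ 2 + β₂ ^ 2 * eunorm r ^ 2)

/-- The weighted norm `ζ^{σ₂}(A,B,H,C,q,r)`. -/
def zeta2 {n m : ℕ} {α : Type*} [SeminormedAddGroup α]
    (α₁ α₂ α₃ α₄ β₁ β₂ : ℝ)
    (A : Matrix (Fin n) (Fin n) α) (B : Matrix (Fin m) (Fin n) α)
    (H : Matrix (Fin m) (Fin n) α) (C : Matrix (Fin m) (Fin m) α)
    (q : Fin n → α) (r : Fin m → α) : ℝ :=
  Real.sqrt (α₁ ^ 2 * frob A ^ 2 + α₂ ^ 2 * frob B ^ 2 + α₃ ^ 2 * frob H ^ 2 +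
    α₄ ^ 2 * frob C ^ 2 + β₁ ^ 2 * eunorm q ^ 2 + β₂ ^ 2 * eunorm r ^ 2)



lemma theta_eq_thetaR {I J : Type*} (X : Matrix I J ℝ) : theta X = thetaR X := by
  classical
  ext i j; simp [theta, thetaR]

lemma hadamard_theta_idem {I J : Type*} (A X : Matrix I J ℝ) :
    (A.hadamard (theta X)).hadamard (theta X) = A.hadamard (theta X) := by
  classical
  ext i j
  by_cases h : X i j = 0 <;> simp [Matrix.hadamard_apply, theta, h]

lemma theta_isSymm {m : ℕ} {X : Matrix (Fin m) (Fin m) ℝ} (h : X.IsSymm) :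
    (theta X).IsSymm := by
  classical
  ext i j
  simp only [Matrix.transpose_apply, theta, Matrix.of_apply, h.apply i j]

lemma hadamard_isSymm {m : ℕ} {A B : Matrix (Fin m) (Fin m) ℝ} (hA : A.IsSymm)
    (hB : B.IsSymm) : (A.hadamard B).IsSymm := by
  ext i j
  simp only [Matrix.transpose_apply, Matrix.hadamard_apply, hA.apply i j, hB.apply i j]

lemma rowKronId_mulVec {a b : ℕ} (u : Fin a → ℝ) (A : Matrix (Fin b) (Fin a) ℝ) :
    rowKronId u *ᵥ vecM A = A *ᵥ u := by
  funext r
  simp only [Matrix.mulVec, dotProduct, rowKronId, vecM, Matrix.of_apply]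
  rw [Fintype.sum_prod_type]
  simp [mul_ite, ite_mul, mul_comm]

lemma idKronRow_mulVec {a b : ℕ} (v : Fin b → ℝ) (B : Matrix (Fin b) (Fin a) ℝ) :
    idKronRow v *ᵥ vecM B = Bᵀ *ᵥ v := by
  funext r
  simp only [Matrix.mulVec, dotProduct, idKronRow, vecM, Matrix.of_apply,
    Matrix.transpose_apply]
  rw [Fintype.sum_prod_type]
  simp [mul_ite, ite_mul, mul_comm]

lemma Sig_mulVec {I J : Type*} [Fintype I] [Fintype J] [DecidableEq I] [DecidableEq J]
    (X A : Matrix I J ℝ) :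
    Sig X *ᵥ vecM A = vecM (A.hadamard (theta X)) := by
  classical
  funext p
  rw [Sig, Matrix.mulVec_diagonal]
  simp [vecM, theta, thetaR, Matrix.hadamard_apply, mul_comm]

lemma Phi_mulVec {m : ℕ} (X A : Matrix (Fin m) (Fin m) ℝ) :
    Phi X *ᵥ vecS A = vecS (A.hadamard (theta X)) := by
  funext p
  rw [Phi, Matrix.mulVec_diagonal]
  simp [vecS, theta, thetaR, Matrix.hadamard_apply, mul_comm]

lemma JS_mulVec {m : ℕ} {A : Matrix (Fin m) (Fin m) ℝ} (hA : A.IsSymm) :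
    JS m *ᵥ vecS A = vecM A := by
  funext cr
  obtain ⟨j, i⟩ := cr
  simp only [Matrix.mulVec, dotProduct, JS, vecS, vecM, Matrix.of_apply, add_mul]
  rcases le_or_gt j i with h | h
  · rw [Fintype.sum_eq_single (⟨(i, j), h⟩ : SymIdx m)]
    · by_cases hij : i = j <;> simp [hij]
    · rintro ⟨⟨a, b⟩, hba⟩ hne
      have h1 : ¬(i = a ∧ j = b) := by
        rintro ⟨rfl, rfl⟩; exact hne rfl
      have h2 : ¬(a ≠ b ∧ i = b ∧ j = a) := by
        rintro ⟨hab, rfl, rfl⟩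
        exact hab (le_antisymm hba h).symm
      simp [h1, h2]
  · rw [Fintype.sum_eq_single (⟨(j, i), h.le⟩ : SymIdx m)]
    · have h1 : ¬(i = j ∧ j = i) := fun ⟨h1, _⟩ => absurd h1 h.ne
      have h2 : j ≠ i := h.ne'
      simp [h1, h2, hA.apply i j]
    · rintro ⟨⟨a, b⟩, hba⟩ hne
      have h1 : ¬(i = a ∧ j = b) := by
        rintro ⟨rfl, rfl⟩
        exact absurd hba (not_le.mpr h)
      have h2 : ¬(a ≠ b ∧ i = b ∧ j = a) := by
        rintro ⟨hab, rfl, rfl⟩; exact hne rfl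
      simp [h1, h2]

lemma sqrt2_ne : (Real.sqrt 2) ≠ 0 := by positivity

lemma DS_det_isUnit (m : ℕ) : IsUnit (DS m).det := by
  rw [DS, Matrix.det_diagonal]
  apply isUnit_iff_ne_zero.mpr
  apply Finset.prod_ne_zero_iff.mpr
  intro p _
  by_cases h : p.1.1 = p.1.2 <;> simp [h, sqrt2_ne]

lemma DS_inv (m : ℕ) : (DS m)⁻¹ =
    Matrix.diagonal (fun p : SymIdx m => if p.1.1 = p.1.2 then 1 else (Real.sqrt 2)⁻¹) := by
  apply Matrix.inv_eq_right_inv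
  rw [DS, Matrix.diagonal_mul_diagonal]
  have h1 : (fun p : SymIdx m => (if p.1.1 = p.1.2 then (1:ℝ) else Real.sqrt 2) *
      (if p.1.1 = p.1.2 then 1 else (Real.sqrt 2)⁻¹)) = fun _ => 1 := by
    funext p
    by_cases h : p.1.1 = p.1.2 <;> simp [h, mul_inv_cancel₀ sqrt2_ne]
  rw [h1, Matrix.diagonal_one]

lemma eunorm_eq {I : Type*} [Fintype I] (v : I → ℝ) :
    eunorm v = Real.sqrt (∑ i, v i ^ 2) := by
  simp [eunorm, Real.norm_eq_abs, sq_abs]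

lemma eunorm_sq {I : Type*} [Fintype I] (v : I → ℝ) : eunorm v ^ 2 = ∑ i, v i ^ 2 := by
  rw [eunorm_eq]
  exact Real.sq_sqrt (by positivity)

lemma eunorm_le_eunorm {I : Type*} [Fintype I] {v w : I → ℝ}
    (h : ∑ i, v i ^ 2 ≤ ∑ i, w i ^ 2) : eunorm v ≤ eunorm w := by
  rw [eunorm_eq, eunorm_eq]
  exact Real.sqrt_le_sqrt h

lemma frob_sq {I J : Type*} [Fintype I] [Fintype J] (A : Matrix I J ℝ) :
    frob A ^ 2 = ∑ i, ∑ j, (A i j) ^ 2 := by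
  have : frob A = Real.sqrt (∑ i, ∑ j, (A i j) ^ 2) := by
    simp [frob, Real.norm_eq_abs, sq_abs]
  rw [this]
  exact Real.sq_sqrt (by positivity)

lemma sum_vecM_sq {I J : Type*} [Fintype I] [Fintype J] (A : Matrix I J ℝ) :
    ∑ p : J × I, (vecM A p) ^ 2 = frob A ^ 2 := by
  rw [frob_sq, Fintype.sum_prod_type]
  exact Finset.sum_comm
lemma frob_sym_sq {m : ℕ} {A : Matrix (Fin m) (Fin m) ℝ} (hA : A.IsSymm) :
    ∑ p : SymIdx m, ((DS m *ᵥ vecS A) p) ^ 2 = frob A ^ 2 := by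
  classical
  have hpt : ∀ p : SymIdx m, ((DS m *ᵥ vecS A) p) ^ 2
      = (if p.1.1 = p.1.2 then (1:ℝ) else 2) * (A p.1.1 p.1.2) ^ 2 := by
    intro p
    rw [DS, Matrix.mulVec_diagonal]
    by_cases h : p.1.1 = p.1.2
    · simp [h, vecS]
    · simp only [h, if_false, mul_pow, vecS]
      rw [Real.sq_sqrt (by norm_num : (0:ℝ) ≤ 2)]
  simp only [hpt]
  have hsub : ∑ p : SymIdx m, (if p.1.1 = p.1.2 then (1:ℝ) else 2) * (A p.1.1 p.1.2) ^ 2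
      = ∑ x ∈ Finset.univ.filter (fun x : Fin m × Fin m => x.2 ≤ x.1),
          (if x.1 = x.2 then (1:ℝ) else 2) * (A x.1 x.2) ^ 2 := by
    exact (Finset.sum_subtype (Finset.univ.filter fun x : Fin m × Fin m => x.2 ≤ x.1)
      (by simp) (fun x : Fin m × Fin m => (if x.1 = x.2 then (1:ℝ) else 2) * (A x.1 x.2) ^ 2)).symm
  rw [hsub, frob_sq, ← Fintype.sum_prod_type']
  have swap_sum : ∑ x ∈ Finset.univ.filter (fun x : Fin m × Fin m => ¬ x.2 ≤ x.1),
        (A x.1 x.2) ^ 2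
      = ∑ x ∈ Finset.univ.filter (fun x : Fin m × Fin m => x.2 ≤ x.1 ∧ ¬ x.1 = x.2),
        (A x.1 x.2) ^ 2 := by
    apply Finset.sum_nbij' (fun x : Fin m × Fin m => (x.2, x.1))
        (fun x : Fin m × Fin m => (x.2, x.1))
    · intro a ha
      simp only [Finset.mem_filter, Finset.mem_univ, true_and] at ha ⊢
      have := lt_of_not_ge ha
      exact ⟨this.le, fun hh => absurd hh.symm this.ne⟩
    · intro a ha
      simp only [Finset.mem_filter, Finset.mem_univ, true_and] at ha ⊢
      exact not_le.mpr (lt_of_le_of_ne ha.1 (fun hh => ha.2 hh.symm))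
    · intro a _; rfl
    · intro a _; rfl
    · intro a _
      simp only []
      rw [hA.apply a.1 a.2]
  rw [← Finset.sum_filter_add_sum_filter_not Finset.univ
    (fun x : Fin m × Fin m => x.2 ≤ x.1) (fun x : Fin m × Fin m => (A x.1 x.2) ^ 2)]
  rw [swap_sum]
  have split : ∑ x ∈ Finset.univ.filter (fun x : Fin m × Fin m => x.2 ≤ x.1),
      (if x.1 = x.2 then (1:ℝ) else 2) * (A x.1 x.2) ^ 2
      = ∑ x ∈ (Finset.univ.filter (fun x : Fin m × Fin m => x.2 ≤ x.1)).filter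
          (fun x => x.1 = x.2), (A x.1 x.2) ^ 2
        + ∑ x ∈ (Finset.univ.filter (fun x : Fin m × Fin m => x.2 ≤ x.1)).filter
          (fun x => ¬ x.1 = x.2), 2 * (A x.1 x.2) ^ 2 := by
    rw [← Finset.sum_ite]
    apply Finset.sum_congr rfl
    intro x _
    by_cases h : x.1 = x.2 <;> simp [h]
  rw [split]
  have split2 : ∑ x ∈ Finset.univ.filter (fun x : Fin m × Fin m => x.2 ≤ x.1),
      (A x.1 x.2) ^ 2
      = ∑ x ∈ (Finset.univ.filter (fun x : Fin m × Fin m => x.2 ≤ x.1)).filter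
          (fun x => x.1 = x.2), (A x.1 x.2) ^ 2
        + ∑ x ∈ (Finset.univ.filter (fun x : Fin m × Fin m => x.2 ≤ x.1)).filter
          (fun x => ¬ x.1 = x.2), (A x.1 x.2) ^ 2 := by
    rw [Finset.sum_filter_add_sum_filter_not]
  rw [split2]
  simp only [Finset.filter_filter, ← Finset.mul_sum]
  ring
/-- Symmetric matrix built from lower-triangular data. -/
def symOf {m : ℕ} (z : SymIdx m → ℝ) : Matrix (Fin m) (Fin m) ℝ :=
  Matrix.of fun i j => if h : j ≤ i then z ⟨(i, j), h⟩ else z ⟨(j, i), (not_le.mp h).le⟩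

lemma symOf_isSymm {m : ℕ} (z : SymIdx m → ℝ) : (symOf z).IsSymm := by
  ext i j
  simp only [Matrix.transpose_apply, symOf, Matrix.of_apply]
  by_cases h1 : j ≤ i <;> by_cases h2 : i ≤ j
  · have h3 := le_antisymm h1 h2
    subst h3
    rfl
  · rw [dif_neg h2, dif_pos h1]
  · rw [dif_pos h2, dif_neg h1]
  · exact absurd (le_total j i) (by simp [h1, h2])

lemma vecS_symOf {m : ℕ} (z : SymIdx m → ℝ) : vecS (symOf z) = z := by
  funext p
  obtain ⟨⟨a, b⟩, h⟩ := p
  simp [vecS, symOf, dif_pos h]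

lemma mulT_ker {K L : Type*} [Fintype K] [Fintype L]
    (M : Matrix K L ℝ) {z : K → ℝ} (h : (M * Mᵀ) *ᵥ z = 0) : Mᵀ *ᵥ z = 0 := by
  have hdot : (Mᵀ *ᵥ z) ⬝ᵥ (Mᵀ *ᵥ z) = 0 := by
    nth_rewrite 1 [Matrix.mulVec_transpose]
    rw [← Matrix.dotProduct_mulVec, Matrix.mulVec_mulVec, h, dotProduct_zero]
  funext i
  have hsum : ∑ j, (Mᵀ *ᵥ z) j ^ 2 = 0 := by
    rw [← hdot]
    simp [dotProduct, sq]
  have := (Finset.sum_eq_zero_iff_of_nonneg (fun j _ => sq_nonneg ((Mᵀ *ᵥ z) j))).mp hsum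
    i (Finset.mem_univ i)
  exact pow_eq_zero_iff (n := 2) (by norm_num) |>.mp this

lemma isUnit_of_ker {K L : Type*} [Fintype K] [Fintype L] [DecidableEq K]
    (M : Matrix K L ℝ) (h : ∀ x : K → ℝ, Mᵀ *ᵥ x = 0 → x = 0) : IsUnit (M * Mᵀ) := by
  rw [← Matrix.mulVec_injective_iff_isUnit]
  intro a b hab
  have hz : (M * Mᵀ) *ᵥ (a - b) = 0 := by
    rw [Matrix.mulVec_sub, hab, sub_self]
  have := h _ (mulT_ker M hz)
  exact sub_eq_zero.mp this

lemma minnorm {K L : Type*} [Fintype K] [Fintype L] [DecidableEq K]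
    (M : Matrix K L ℝ) (hM : IsUnit (M * Mᵀ)) (w : K → ℝ) :
    M *ᵥ ((Mᵀ * (M * Mᵀ)⁻¹) *ᵥ w) = w ∧
      ∀ x : L → ℝ, M *ᵥ x = w → eunorm ((Mᵀ * (M * Mᵀ)⁻¹) *ᵥ w) ≤ eunorm x := by
  have hdet : IsUnit (M * Mᵀ).det := (Matrix.isUnit_iff_isUnit_det _).mp hM
  have hsol : M *ᵥ ((Mᵀ * (M * Mᵀ)⁻¹) *ᵥ w) = w := by
    rw [Matrix.mulVec_mulVec, ← Matrix.mul_assoc, Matrix.mul_nonsing_inv _ hdet,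
      Matrix.one_mulVec]
  refine ⟨hsol, fun x hx => ?_⟩
  set xs := (Mᵀ * (M * Mᵀ)⁻¹) *ᵥ w with hxs
  have h0 : M *ᵥ (x - xs) = 0 := by
    rw [Matrix.mulVec_sub, hx, hsol, sub_self]
  have horth : xs ⬝ᵥ (x - xs) = 0 := by
    have key : ∀ z : L → ℝ, M *ᵥ z = 0 → xs ⬝ᵥ z = 0 := by
      intro z hz
      have hxse : xs = Mᵀ *ᵥ ((M * Mᵀ)⁻¹ *ᵥ w) := by rw [Matrix.mulVec_mulVec]
      rw [hxse, Matrix.mulVec_transpose, ← Matrix.dotProduct_mulVec, hz,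
        dotProduct_zero]
    exact key _ h0
  apply eunorm_le_eunorm
  have key : ∑ i, x i ^ 2 = ∑ i, xs i ^ 2 + ∑ i, (x i - xs i) ^ 2
      + 2 * (xs ⬝ᵥ (x - xs)) := by
    simp only [dotProduct, Pi.sub_apply, Finset.mul_sum, ← Finset.sum_add_distrib]
    apply Finset.sum_congr rfl
    intro i _
    ring
  rw [key, horth]
  have : (0:ℝ) ≤ ∑ i, (x i - xs i) ^ 2 := by positivity
  linarith
lemma symOf_vecS {m : ℕ} {A : Matrix (Fin m) (Fin m) ℝ} (hA : A.IsSymm) :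
    symOf (vecS A) = A := by
  ext i j
  simp only [symOf, Matrix.of_apply, vecS]
  by_cases h : j ≤ i
  · rw [dif_pos h]
  · rw [dif_neg h]
    exact hA.apply i j

/-- Matrix from a column-major vectorization. -/
def unvec {a b : ℕ} (z : Fin a × Fin b → ℝ) : Matrix (Fin b) (Fin a) ℝ :=
  Matrix.of fun i j => z (j, i)

lemma DSinv_DS {m : ℕ} (z : SymIdx m → ℝ) : (DS m)⁻¹ *ᵥ (DS m *ᵥ z) = z := by
  rw [Matrix.mulVec_mulVec, Matrix.nonsing_inv_mul _ (DS_det_isUnit m), Matrix.one_mulVec]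

lemma blockE_general {n : ℕ} {E : Matrix (Fin n) (Fin n) ℝ} (hE : E.IsSymm)
    (uh : Fin n → ℝ) (z : SymIdx n → ℝ) :
    (rowKronId uh * (JS n * Phi E * (DS n)⁻¹)) *ᵥ z
      = ((symOf ((DS n)⁻¹ *ᵥ z)).hadamard (theta E)) *ᵥ uh := by
  have h1 : (rowKronId uh * (JS n * Phi E * (DS n)⁻¹)) *ᵥ z
      = rowKronId uh *ᵥ (JS n *ᵥ (Phi E *ᵥ ((DS n)⁻¹ *ᵥ z))) := by
    simp only [Matrix.mulVec_mulVec, Matrix.mul_assoc]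
    rfl
  rw [h1]
  generalize (DS n)⁻¹ *ᵥ z = w
  have h2 : Phi E *ᵥ w = vecS ((symOf w).hadamard (theta E)) := by
    conv_lhs => rw [show w = vecS (symOf w) from (vecS_symOf w).symm]
    rw [Phi_mulVec]
  rw [h2, JS_mulVec (hadamard_isSymm (symOf_isSymm w) (theta_isSymm hE)), rowKronId_mulVec]

lemma blockF_general {n m : ℕ} (F : Matrix (Fin m) (Fin n) ℝ) (ph : Fin m → ℝ)
    (z : Fin n × Fin m → ℝ) :
    (idKronRow ph * Sig F) *ᵥ z = ((unvec z).hadamard (theta F))ᵀ *ᵥ ph := by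
  have h1 : Sig F *ᵥ z = vecM ((unvec z).hadamard (theta F)) := Sig_mulVec F (unvec z)
  rw [show (idKronRow ph * Sig F) *ᵥ z = idKronRow ph *ᵥ (Sig F *ᵥ z) from
    (Matrix.mulVec_mulVec _ _ _).symm, h1, idKronRow_mulVec]

lemma blockH_general {n m : ℕ} (H : Matrix (Fin m) (Fin n) ℝ) (uh : Fin n → ℝ)
    (z : Fin n × Fin m → ℝ) :
    (rowKronId uh * Sig H) *ᵥ z = ((unvec z).hadamard (theta H)) *ᵥ uh := by
  have h1 : Sig H *ᵥ z = vecM ((unvec z).hadamard (theta H)) := Sig_mulVec H (unvec z)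
  rw [show (rowKronId uh * Sig H) *ᵥ z = rowKronId uh *ᵥ (Sig H *ᵥ z) from
    (Matrix.mulVec_mulVec _ _ _).symm, h1, rowKronId_mulVec]

lemma blockE_pattern {n : ℕ} {E A : Matrix (Fin n) (Fin n) ℝ} (hE : E.IsSymm)
    (hA : A.IsSymm) (hpat : A.hadamard (theta E) = A) (uh : Fin n → ℝ) :
    (rowKronId uh * (JS n * Phi E * (DS n)⁻¹)) *ᵥ (DS n *ᵥ vecS A) = A *ᵥ uh := by
  rw [blockE_general hE, DSinv_DS, symOf_vecS hA, hpat]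

lemma blockF_pattern {n m : ℕ} {F B : Matrix (Fin m) (Fin n) ℝ}
    (hpat : B.hadamard (theta F) = B) (ph : Fin m → ℝ) :
    (idKronRow ph * Sig F) *ᵥ vecM B = Bᵀ *ᵥ ph := by
  rw [blockF_general]
  congr 1
  rw [show unvec (vecM B) = B from rfl, hpat]

lemma blockH_pattern {n m : ℕ} {H C : Matrix (Fin m) (Fin n) ℝ}
    (hpat : C.hadamard (theta H) = C) (uh : Fin n → ℝ) :
    (rowKronId uh * Sig H) *ᵥ vecM C = C *ᵥ uh := by
  rw [blockH_general]
  congr 1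
lemma isSymm_smul {m : ℕ} (c : ℝ) {A : Matrix (Fin m) (Fin m) ℝ} (hA : A.IsSymm) :
    (c • A).IsSymm := by
  rw [Matrix.IsSymm, Matrix.transpose_smul, hA]

lemma constraint_iff₁ {n m : ℕ} (E A₁ : Matrix (Fin n) (Fin n) ℝ)
    (F B : Matrix (Fin m) (Fin n) ℝ) (q Δq uh : Fin n → ℝ) (ph : Fin m → ℝ) :
    (E + A₁) *ᵥ uh + (F + B)ᵀ *ᵥ ph = q + Δq ↔
      A₁ *ᵥ uh + Bᵀ *ᵥ ph - Δq = q - E *ᵥ uh - Fᵀ *ᵥ ph := by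
  rw [Matrix.add_mulVec, Matrix.transpose_add, Matrix.add_mulVec]
  constructor <;> intro h <;> funext i <;> have h' := congrFun h i <;>
    simp only [Pi.add_apply, Pi.sub_apply] at h' ⊢ <;> linarith

lemma constraint_iff₂ {n m : ℕ} (H C : Matrix (Fin m) (Fin n) ℝ)
    (G A₂ : Matrix (Fin m) (Fin m) ℝ) (r Δr : Fin m → ℝ) (uh : Fin n → ℝ) (ph : Fin m → ℝ) :
    (H + C) *ᵥ uh + (G + A₂) *ᵥ ph = r + Δr ↔
      C *ᵥ uh + A₂ *ᵥ ph - Δr = r - H *ᵥ uh - G *ᵥ ph := by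
  rw [Matrix.add_mulVec, Matrix.add_mulVec]
  constructor <;> intro h <;> funext i <;> have h' := congrFun h i <;>
    simp only [Pi.add_apply, Pi.sub_apply] at h' ⊢ <;> linarith
/-- Encoding of a perturbation tuple as a long vector. -/
def encode {n m : ℕ} (α₁ α₂ α₃ α₄ β₁ β₂ : ℝ)
    (A₁ : Matrix (Fin n) (Fin n) ℝ) (B C : Matrix (Fin m) (Fin n) ℝ)
    (A₂ : Matrix (Fin m) (Fin m) ℝ) (dq : Fin n → ℝ) (dr : Fin m → ℝ) :
    (SymIdx n ⊕ ((Fin n × Fin m) ⊕ ((Fin n × Fin m) ⊕ SymIdx m))) ⊕ (Fin n ⊕ Fin m) → ℝ :=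
  Sum.elim (Sum.elim (α₁ • (DS n *ᵥ vecS A₁))
    (Sum.elim (α₂ • vecM B) (Sum.elim (α₃ • vecM C) (α₄ • (DS m *ᵥ vecS A₂)))))
    (Sum.elim (β₁ • dq) (β₂ • dr))

lemma mulVec_encode {n m : ℕ} {E : Matrix (Fin n) (Fin n) ℝ} (hE : E.IsSymm)
    (F H : Matrix (Fin m) (Fin n) ℝ) {G : Matrix (Fin m) (Fin m) ℝ} (hG : G.IsSymm)
    (uh : Fin n → ℝ) (ph : Fin m → ℝ)
    {α₁ α₂ α₃ α₄ β₁ β₂ : ℝ} (hα₁ : α₁ ≠ 0) (hα₂ : α₂ ≠ 0) (hα₃ : α₃ ≠ 0) (hα₄ : α₄ ≠ 0)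
    (hβ₁ : β₁ ≠ 0) (hβ₂ : β₂ ≠ 0)
    {A₁ : Matrix (Fin n) (Fin n) ℝ} (hA₁ : A₁.IsSymm) (hp₁ : A₁.hadamard (theta E) = A₁)
    {B : Matrix (Fin m) (Fin n) ℝ} (hpB : B.hadamard (theta F) = B)
    {C : Matrix (Fin m) (Fin n) ℝ} (hpC : C.hadamard (theta H) = C)
    {A₂ : Matrix (Fin m) (Fin m) ℝ} (hA₂ : A₂.IsSymm) (hp₂ : A₂.hadamard (theta G) = A₂)
    (dq : Fin n → ℝ) (dr : Fin m → ℝ) :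
    (fromBlocks
      (fromCols (α₁⁻¹ • (rowKronId uh * (JS n * Phi E * (DS n)⁻¹)))
        (fromCols (α₂⁻¹ • (idKronRow ph * Sig F)) 0))
      (fromCols ((-(β₁⁻¹)) • (1 : Matrix (Fin n) (Fin n) ℝ)) 0)
      (fromCols 0 (fromCols 0
        (fromCols (α₃⁻¹ • (rowKronId uh * Sig H))
          (α₄⁻¹ • (rowKronId ph * (JS m * Phi G * (DS m)⁻¹))))))
      (fromCols 0 ((-(β₂⁻¹)) • (1 : Matrix (Fin m) (Fin m) ℝ)))) *ᵥ
      encode α₁ α₂ α₃ α₄ β₁ β₂ A₁ B C A₂ dq dr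
    = Sum.elim (A₁ *ᵥ uh + Bᵀ *ᵥ ph - dq) (C *ᵥ uh + A₂ *ᵥ ph - dr) := by
  have e1 : (α₁⁻¹ • (rowKronId uh * (JS n * Phi E * (DS n)⁻¹))) *ᵥ
      (α₁ • (DS n *ᵥ vecS A₁)) = A₁ *ᵥ uh := by
    rw [Matrix.smul_mulVec, Matrix.mulVec_smul, smul_smul, inv_mul_cancel₀ hα₁,
      one_smul, blockE_pattern hE hA₁ hp₁]
  have e2 : (α₂⁻¹ • (idKronRow ph * Sig F)) *ᵥ (α₂ • vecM B) = Bᵀ *ᵥ ph := by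
    rw [Matrix.smul_mulVec, Matrix.mulVec_smul, smul_smul, inv_mul_cancel₀ hα₂,
      one_smul, blockF_pattern hpB]
  have e3 : (α₃⁻¹ • (rowKronId uh * Sig H)) *ᵥ (α₃ • vecM C) = C *ᵥ uh := by
    rw [Matrix.smul_mulVec, Matrix.mulVec_smul, smul_smul, inv_mul_cancel₀ hα₃,
      one_smul, blockH_pattern hpC]
  have e4 : (α₄⁻¹ • (rowKronId ph * (JS m * Phi G * (DS m)⁻¹))) *ᵥ
      (α₄ • (DS m *ᵥ vecS A₂)) = A₂ *ᵥ ph := by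
    rw [Matrix.smul_mulVec, Matrix.mulVec_smul, smul_smul, inv_mul_cancel₀ hα₄,
      one_smul, blockE_pattern hG hA₂ hp₂]
  have e5 : ((-(β₁⁻¹)) • (1 : Matrix (Fin n) (Fin n) ℝ)) *ᵥ (β₁ • dq) = -dq := by
    rw [Matrix.smul_mulVec, Matrix.one_mulVec, smul_smul, neg_mul,
      inv_mul_cancel₀ hβ₁, neg_smul, one_smul]
  have e6 : ((-(β₂⁻¹)) • (1 : Matrix (Fin m) (Fin m) ℝ)) *ᵥ (β₂ • dr) = -dr := by
    rw [Matrix.smul_mulVec, Matrix.one_mulVec, smul_smul, neg_mul,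
      inv_mul_cancel₀ hβ₂, neg_smul, one_smul]
  rw [encode, Matrix.fromBlocks_mulVec]
  simp only [Sum.elim_comp_inl, Sum.elim_comp_inr, Matrix.fromCols_mulVec_sumElim,
    e1, e2, e3, e4, e5, e6, Matrix.zero_mulVec, add_zero, zero_add]
  congr 1 <;> abel

lemma eunorm_encode {n m : ℕ} (α₁ α₂ α₃ α₄ β₁ β₂ : ℝ)
    {A₁ : Matrix (Fin n) (Fin n) ℝ} (hA₁ : A₁.IsSymm)
    (B C : Matrix (Fin m) (Fin n) ℝ)
    {A₂ : Matrix (Fin m) (Fin m) ℝ} (hA₂ : A₂.IsSymm) (dq : Fin n → ℝ) (dr : Fin m → ℝ) :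
    eunorm (encode α₁ α₂ α₃ α₄ β₁ β₂ A₁ B C A₂ dq dr)
      = zeta2 α₁ α₂ α₃ α₄ β₁ β₂ A₁ B C A₂ dq dr := by
  rw [eunorm_eq, zeta2]
  congr 1
  simp only [encode, Fintype.sum_sum_type, Sum.elim_inl, Sum.elim_inr, Pi.smul_apply,
    smul_eq_mul, mul_pow]
  rw [← Finset.mul_sum, ← Finset.mul_sum, ← Finset.mul_sum, ← Finset.mul_sum,
    ← Finset.mul_sum, ← Finset.mul_sum]
  rw [frob_sym_sq hA₁, frob_sym_sq hA₂, sum_vecM_sq, sum_vecM_sq,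
    eunorm_sq dq, eunorm_sq dr]
  ring
lemma mulVec_blocks {n m : ℕ} {E : Matrix (Fin n) (Fin n) ℝ} (hE : E.IsSymm)
    (F H : Matrix (Fin m) (Fin n) ℝ) {G : Matrix (Fin m) (Fin m) ℝ} (hG : G.IsSymm)
    (uh : Fin n → ℝ) (ph : Fin m → ℝ) (α₁ α₂ α₃ α₄ β₁ β₂ : ℝ)
    (zE : SymIdx n → ℝ) (zF zH : Fin n × Fin m → ℝ) (zG : SymIdx m → ℝ)
    (zq : Fin n → ℝ) (zr : Fin m → ℝ) :
    (fromBlocks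
      (fromCols (α₁⁻¹ • (rowKronId uh * (JS n * Phi E * (DS n)⁻¹)))
        (fromCols (α₂⁻¹ • (idKronRow ph * Sig F)) 0))
      (fromCols ((-(β₁⁻¹)) • (1 : Matrix (Fin n) (Fin n) ℝ)) 0)
      (fromCols 0 (fromCols 0
        (fromCols (α₃⁻¹ • (rowKronId uh * Sig H))
          (α₄⁻¹ • (rowKronId ph * (JS m * Phi G * (DS m)⁻¹))))))
      (fromCols 0 ((-(β₂⁻¹)) • (1 : Matrix (Fin m) (Fin m) ℝ)))) *ᵥ
      Sum.elim (Sum.elim zE (Sum.elim zF (Sum.elim zH zG))) (Sum.elim zq zr)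
    = Sum.elim
        (((α₁⁻¹ • symOf ((DS n)⁻¹ *ᵥ zE)).hadamard (theta E)) *ᵥ uh
          + ((α₂⁻¹ • unvec zF).hadamard (theta F))ᵀ *ᵥ ph - β₁⁻¹ • zq)
        (((α₃⁻¹ • unvec zH).hadamard (theta H)) *ᵥ uh
          + ((α₄⁻¹ • symOf ((DS m)⁻¹ *ᵥ zG)).hadamard (theta G)) *ᵥ ph - β₂⁻¹ • zr) := by
  have e1 : (α₁⁻¹ • (rowKronId uh * (JS n * Phi E * (DS n)⁻¹))) *ᵥ zE
      = ((α₁⁻¹ • symOf ((DS n)⁻¹ *ᵥ zE)).hadamard (theta E)) *ᵥ uh := by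
    rw [Matrix.smul_mulVec, blockE_general hE, Matrix.smul_hadamard,
      Matrix.smul_mulVec]
  have e2 : (α₂⁻¹ • (idKronRow ph * Sig F)) *ᵥ zF
      = ((α₂⁻¹ • unvec zF).hadamard (theta F))ᵀ *ᵥ ph := by
    rw [Matrix.smul_mulVec, blockF_general, Matrix.smul_hadamard,
      Matrix.transpose_smul, Matrix.smul_mulVec]
  have e3 : (α₃⁻¹ • (rowKronId uh * Sig H)) *ᵥ zH
      = ((α₃⁻¹ • unvec zH).hadamard (theta H)) *ᵥ uh := by
    rw [Matrix.smul_mulVec, blockH_general, Matrix.smul_hadamard,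
      Matrix.smul_mulVec]
  have e4 : (α₄⁻¹ • (rowKronId ph * (JS m * Phi G * (DS m)⁻¹))) *ᵥ zG
      = ((α₄⁻¹ • symOf ((DS m)⁻¹ *ᵥ zG)).hadamard (theta G)) *ᵥ ph := by
    rw [Matrix.smul_mulVec, blockE_general hG, Matrix.smul_hadamard,
      Matrix.smul_mulVec]
  have e5 : ((-(β₁⁻¹)) • (1 : Matrix (Fin n) (Fin n) ℝ)) *ᵥ zq = -(β₁⁻¹ • zq) := by
    rw [Matrix.smul_mulVec, Matrix.one_mulVec, neg_smul]
  have e6 : ((-(β₂⁻¹)) • (1 : Matrix (Fin m) (Fin m) ℝ)) *ᵥ zr = -(β₂⁻¹ • zr) := by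
    rw [Matrix.smul_mulVec, Matrix.one_mulVec, neg_smul]
  rw [Matrix.fromBlocks_mulVec]
  simp only [Sum.elim_comp_inl, Sum.elim_comp_inr, Matrix.fromCols_mulVec_sumElim,
    e1, e2, e3, e4, e5, e6, Matrix.zero_mulVec, add_zero, zero_add]
  congr 1 <;> abel

lemma encE_pointwise {n : ℕ} {α₁ : ℝ} (hα₁ : α₁ ≠ 0) (E : Matrix (Fin n) (Fin n) ℝ)
    (zE : SymIdx n → ℝ) (p : SymIdx n) :
    (α₁ • (DS n *ᵥ vecS ((α₁⁻¹ • symOf ((DS n)⁻¹ *ᵥ zE)).hadamard (theta E)))) p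
      = thetaR E p.1.1 p.1.2 * zE p := by
  classical
  have h2 : symOf ((DS n)⁻¹ *ᵥ zE) p.1.1 p.1.2 = vecS (symOf ((DS n)⁻¹ *ᵥ zE)) p := rfl
  have h1 : vecS ((α₁⁻¹ • symOf ((DS n)⁻¹ *ᵥ zE)).hadamard (theta E)) p
      = α₁⁻¹ * ((if p.1.1 = p.1.2 then (1:ℝ) else (Real.sqrt 2)⁻¹) * zE p)
        * thetaR E p.1.1 p.1.2 := by
    rw [vecS, Matrix.hadamard_apply, Matrix.smul_apply, smul_eq_mul, h2, vecS_symOf,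
      DS_inv, Matrix.mulVec_diagonal, theta_eq_thetaR]
  have hDSapp : ∀ z : SymIdx n → ℝ,
      (DS n *ᵥ z) p = (if p.1.1 = p.1.2 then (1:ℝ) else Real.sqrt 2) * z p := by
    intro z
    rw [DS, Matrix.mulVec_diagonal]
  rw [Pi.smul_apply, hDSapp, h1, smul_eq_mul]
  by_cases h : p.1.1 = p.1.2 <;> simp only [h, if_true, if_false] <;> field_simp <;> ring

lemma encF_pointwise {n m : ℕ} {α₂ : ℝ} (hα₂ : α₂ ≠ 0) (F : Matrix (Fin m) (Fin n) ℝ)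
    (zF : Fin n × Fin m → ℝ) (p : Fin n × Fin m) :
    (α₂ • vecM ((α₂⁻¹ • unvec zF).hadamard (theta F))) p = thetaR F p.2 p.1 * zF p := by
  rw [Pi.smul_apply, vecM, Matrix.hadamard_apply, Matrix.smul_apply, smul_eq_mul,
    smul_eq_mul, theta_eq_thetaR]
  have h1 : unvec zF p.2 p.1 = zF p := rfl
  rw [h1]
  field_simp
/-- Corollary 3.9: sparsity-preserving structured backward error for the real
GSPP with `E` symmetric, `F ≠ H` general, `G` symmetric. -/
theorem structured_BE_real_case_e
    (n m : ℕ) (E : Matrix (Fin n) (Fin n) ℝ) (hE : E.IsSymm)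
    (F H : Matrix (Fin m) (Fin n) ℝ) (G : Matrix (Fin m) (Fin m) ℝ) (hG : G.IsSymm)
    (q : Fin n → ℝ) (r : Fin m → ℝ) (uh : Fin n → ℝ) (ph : Fin m → ℝ)
    (α₁ α₂ α₃ α₄ β₁ β₂ : ℝ)
    (hα₁ : 0 < α₁) (hα₂ : 0 < α₂) (hα₃ : 0 < α₃) (hα₄ : 0 < α₄)
    (hβ₁ : 0 < β₁) (hβ₂ : 0 < β₂) :
    let Q : Fin n → ℝ := q - E *ᵥ uh - Fᵀ *ᵥ ph
    let R : Fin m → ℝ := r - H *ᵥ uh - G *ᵥ ph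
    let N₁ := JS n * Phi E * (DS n)⁻¹
    let S₁ := JS m * Phi G * (DS m)⁻¹
    let M₁ : Matrix (Fin n)
        (SymIdx n ⊕ ((Fin n × Fin m) ⊕ ((Fin n × Fin m) ⊕ SymIdx m))) ℝ :=
      fromCols (α₁⁻¹ • (rowKronId uh * N₁))
        (fromCols (α₂⁻¹ • (idKronRow ph * Sig F)) 0)
    let M₂ : Matrix (Fin m)
        (SymIdx n ⊕ ((Fin n × Fin m) ⊕ ((Fin n × Fin m) ⊕ SymIdx m))) ℝ :=
      fromCols 0
        (fromCols 0
          (fromCols (α₃⁻¹ • (rowKronId uh * Sig H)) (α₄⁻¹ • (rowKronId ph * S₁))))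
    let I₁ : Matrix (Fin n) (Fin n ⊕ Fin m) ℝ :=
      fromCols ((-(β₁⁻¹)) • (1 : Matrix (Fin n) (Fin n) ℝ)) 0
    let I₂ : Matrix (Fin m) (Fin n ⊕ Fin m) ℝ :=
      fromCols 0 ((-(β₂⁻¹)) • (1 : Matrix (Fin m) (Fin m) ℝ))
    let M := fromBlocks M₁ I₁ M₂ I₂
    let w : Fin n ⊕ Fin m → ℝ := Sum.elim Q R
    IsUnit (M * Mᵀ) ∧
      IsLeast
        {t : ℝ | ∃ (ΔE : Matrix (Fin n) (Fin n) ℝ) (ΔF ΔH : Matrix (Fin m) (Fin n) ℝ)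
            (ΔG : Matrix (Fin m) (Fin m) ℝ) (Δq : Fin n → ℝ) (Δr : Fin m → ℝ),
            ΔE.IsSymm ∧ ΔG.IsSymm ∧
            (E + ΔE.hadamard (theta E)) *ᵥ uh + (F + ΔF.hadamard (theta F))ᵀ *ᵥ ph = q + Δq ∧
            (H + ΔH.hadamard (theta H)) *ᵥ uh + (G + ΔG.hadamard (theta G)) *ᵥ ph = r + Δr ∧
            t = zeta2 α₁ α₂ α₃ α₄ β₁ β₂ (ΔE.hadamard (theta E)) (ΔF.hadamard (theta F))
                  (ΔH.hadamard (theta H)) (ΔG.hadamard (theta G)) Δq Δr}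
        (eunorm ((Mᵀ * (M * Mᵀ)⁻¹) *ᵥ w)) := by
  intro Q R N₁ S₁ M₁ M₂ I₁ I₂ M w
  classical
  have hMdef : M = fromBlocks
      (fromCols (α₁⁻¹ • (rowKronId uh * (JS n * Phi E * (DS n)⁻¹)))
        (fromCols (α₂⁻¹ • (idKronRow ph * Sig F)) 0))
      (fromCols ((-(β₁⁻¹)) • (1 : Matrix (Fin n) (Fin n) ℝ)) 0)
      (fromCols 0 (fromCols 0
        (fromCols (α₃⁻¹ • (rowKronId uh * Sig H))
          (α₄⁻¹ • (rowKronId ph * (JS m * Phi G * (DS m)⁻¹))))))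
      (fromCols 0 ((-(β₂⁻¹)) • (1 : Matrix (Fin m) (Fin m) ℝ))) := rfl
  have hwdef : w = Sum.elim (q - E *ᵥ uh - Fᵀ *ᵥ ph) (r - H *ᵥ uh - G *ᵥ ph) := rfl
  -- the kernel of Mᵀ is trivial
  have hker : ∀ x : Fin n ⊕ Fin m → ℝ, Mᵀ *ᵥ x = 0 → x = 0 := by
    intro x hx
    rw [hMdef, Matrix.fromBlocks_transpose, Matrix.fromBlocks_mulVec] at hx
    have hI : ∀ (v : Fin n → ℝ) (v' : Fin m → ℝ),
        (fromCols ((-(β₁⁻¹)) • (1 : Matrix (Fin n) (Fin n) ℝ)) 0)ᵀ *ᵥ v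
          + (fromCols 0 ((-(β₂⁻¹)) • (1 : Matrix (Fin m) (Fin m) ℝ)))ᵀ *ᵥ v'
        = Sum.elim ((-(β₁⁻¹)) • v) ((-(β₂⁻¹)) • v') := by
      intro v v'
      rw [Matrix.transpose_fromCols, Matrix.transpose_fromCols, Matrix.transpose_smul,
        Matrix.transpose_one, Matrix.transpose_smul, Matrix.transpose_one,
        Matrix.transpose_zero, Matrix.transpose_zero, Matrix.fromRows_mulVec,
        Matrix.fromRows_mulVec, Matrix.smul_mulVec, Matrix.smul_mulVec,
        Matrix.one_mulVec, Matrix.one_mulVec, Matrix.zero_mulVec, Matrix.zero_mulVec]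
      funext l
      rcases l with i | i <;> simp
    funext l
    rcases l with i | i
    · have h := congrFun hx (Sum.inr (Sum.inl i))
      rw [Sum.elim_inr, hI] at h
      rw [Sum.elim_inl] at h
      have h' : -(β₁⁻¹) * x (Sum.inl i) = 0 := h
      have hβ : (β₁ : ℝ)⁻¹ ≠ 0 := inv_ne_zero hβ₁.ne'
      rcases mul_eq_zero.mp h' with h'' | h''
      · exact absurd (neg_eq_zero.mp h'') hβ
      · exact h''
    · have h := congrFun hx (Sum.inr (Sum.inr i))
      rw [Sum.elim_inr, hI] at h
      rw [Sum.elim_inr] at h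
      have h' : -(β₂⁻¹) * x (Sum.inr i) = 0 := h
      have hβ : (β₂ : ℝ)⁻¹ ≠ 0 := inv_ne_zero hβ₂.ne'
      rcases mul_eq_zero.mp h' with h'' | h''
      · exact absurd (neg_eq_zero.mp h'') hβ
      · exact h''
  have hunit : IsUnit (M * Mᵀ) := isUnit_of_ker M hker
  obtain ⟨hsol, hmin⟩ := minnorm M hunit w
  refine ⟨hunit, ?_, ?_⟩
  · -- membership
    set xs : (SymIdx n ⊕ ((Fin n × Fin m) ⊕ ((Fin n × Fin m) ⊕ SymIdx m))) ⊕ (Fin n ⊕ Fin m) → ℝ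
      := (Mᵀ * (M * Mᵀ)⁻¹) *ᵥ w with hxs
    set zE : SymIdx n → ℝ := fun p => xs (Sum.inl (Sum.inl p)) with hzE
    set zF : Fin n × Fin m → ℝ := fun p => xs (Sum.inl (Sum.inr (Sum.inl p))) with hzF
    set zH : Fin n × Fin m → ℝ := fun p => xs (Sum.inl (Sum.inr (Sum.inr (Sum.inl p)))) with hzH
    set zG : SymIdx m → ℝ := fun p => xs (Sum.inl (Sum.inr (Sum.inr (Sum.inr p)))) with hzG
    set zq : Fin n → ℝ := fun i => xs (Sum.inr (Sum.inl i)) with hzq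
    set zr : Fin m → ℝ := fun i => xs (Sum.inr (Sum.inr i)) with hzr
    set ΔE := α₁⁻¹ • symOf ((DS n)⁻¹ *ᵥ zE) with hΔE
    set ΔF := α₂⁻¹ • unvec zF with hΔF
    set ΔH := α₃⁻¹ • unvec zH with hΔH
    set ΔG := α₄⁻¹ • symOf ((DS m)⁻¹ *ᵥ zG) with hΔG
    set Δq := β₁⁻¹ • zq with hΔq
    set Δr := β₂⁻¹ • zr with hΔr
    have hxs_elim : xs = Sum.elim (Sum.elim zE (Sum.elim zF (Sum.elim zH zG)))
        (Sum.elim zq zr) := by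
      funext l
      rcases l with (p | (p | (p | p))) | (i | i) <;> rfl
    have hMxs : M *ᵥ xs = w := hsol
    have hblocks : M *ᵥ xs = Sum.elim
        ((ΔE.hadamard (theta E)) *ᵥ uh + (ΔF.hadamard (theta F))ᵀ *ᵥ ph - Δq)
        ((ΔH.hadamard (theta H)) *ᵥ uh + (ΔG.hadamard (theta G)) *ᵥ ph - Δr) := by
      conv_lhs => rw [hxs_elim]
      rw [hMdef, mulVec_blocks hE F H hG uh ph α₁ α₂ α₃ α₄ β₁ β₂ zE zF zH zG zq zr]
    have hcomb := hblocks.symm.trans hMxs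
    rw [hwdef] at hcomb
    have h1 : (ΔE.hadamard (theta E)) *ᵥ uh + (ΔF.hadamard (theta F))ᵀ *ᵥ ph - Δq
        = q - E *ᵥ uh - Fᵀ *ᵥ ph := funext fun i => congrFun hcomb (Sum.inl i)
    have h2 : (ΔH.hadamard (theta H)) *ᵥ uh + (ΔG.hadamard (theta G)) *ᵥ ph - Δr
        = r - H *ᵥ uh - G *ᵥ ph := funext fun i => congrFun hcomb (Sum.inr i)
    have hc1 := (constraint_iff₁ E (ΔE.hadamard (theta E)) F (ΔF.hadamard (theta F))
      q Δq uh ph).mpr h1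
    have hc2 := (constraint_iff₂ H (ΔH.hadamard (theta H)) G (ΔG.hadamard (theta G))
      r Δr uh ph).mpr h2
    refine ⟨ΔE, ΔF, ΔH, ΔG, Δq, Δr, isSymm_smul _ (symOf_isSymm _),
      isSymm_smul _ (symOf_isSymm _), hc1, hc2, ?_⟩
    -- value equality
    rw [← eunorm_encode α₁ α₂ α₃ α₄ β₁ β₂
      (hadamard_isSymm (isSymm_smul _ (symOf_isSymm _)) (theta_isSymm hE))
      (ΔF.hadamard (theta F)) (ΔH.hadamard (theta H))
      (hadamard_isSymm (isSymm_smul _ (symOf_isSymm _)) (theta_isSymm hG)) Δq Δr]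
    have henc : M *ᵥ encode α₁ α₂ α₃ α₄ β₁ β₂ (ΔE.hadamard (theta E)) (ΔF.hadamard (theta F))
        (ΔH.hadamard (theta H)) (ΔG.hadamard (theta G)) Δq Δr = w := by
      rw [hMdef, mulVec_encode hE F H hG uh ph hα₁.ne' hα₂.ne' hα₃.ne' hα₄.ne' hβ₁.ne' hβ₂.ne'
        (hadamard_isSymm (isSymm_smul _ (symOf_isSymm _)) (theta_isSymm hE))
        (hadamard_theta_idem ΔE E) (hadamard_theta_idem ΔF F) (hadamard_theta_idem ΔH H)
        (hadamard_isSymm (isSymm_smul _ (symOf_isSymm _)) (theta_isSymm hG))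
        (hadamard_theta_idem ΔG G) Δq Δr, hwdef]
      rw [h1, h2]
    apply le_antisymm
    · -- eunorm xs ≤ eunorm encode
      exact hmin _ henc
    · -- eunorm encode ≤ eunorm xs
      apply eunorm_le_eunorm
      apply Finset.sum_le_sum
      intro l _
      rcases l with (p | (p | (p | p))) | (i | i)
      · have he := encE_pointwise hα₁.ne' E zE p
        rw [show encode α₁ α₂ α₃ α₄ β₁ β₂ (ΔE.hadamard (theta E)) (ΔF.hadamard (theta F))
          (ΔH.hadamard (theta H)) (ΔG.hadamard (theta G)) Δq Δr (Sum.inl (Sum.inl p))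
          = (α₁ • (DS n *ᵥ vecS (ΔE.hadamard (theta E)))) p from rfl, hΔE, he]
        by_cases h : E p.1.1 p.1.2 = 0 <;> simp [thetaR, h, sq_nonneg] <;> exact le_rfl
      · have he := encF_pointwise hα₂.ne' F zF p
        rw [show encode α₁ α₂ α₃ α₄ β₁ β₂ (ΔE.hadamard (theta E)) (ΔF.hadamard (theta F))
          (ΔH.hadamard (theta H)) (ΔG.hadamard (theta G)) Δq Δr (Sum.inl (Sum.inr (Sum.inl p)))
          = (α₂ • vecM (ΔF.hadamard (theta F))) p from rfl, hΔF, he]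
        by_cases h : F p.2 p.1 = 0 <;> simp [thetaR, h, sq_nonneg] <;> exact le_rfl
      · have he := encF_pointwise hα₃.ne' H zH p
        rw [show encode α₁ α₂ α₃ α₄ β₁ β₂ (ΔE.hadamard (theta E)) (ΔF.hadamard (theta F))
          (ΔH.hadamard (theta H)) (ΔG.hadamard (theta G)) Δq Δr
            (Sum.inl (Sum.inr (Sum.inr (Sum.inl p))))
          = (α₃ • vecM (ΔH.hadamard (theta H))) p from rfl, hΔH, he]
        by_cases h : H p.2 p.1 = 0 <;> simp [thetaR, h, sq_nonneg] <;> exact le_rfl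
      · have he := encE_pointwise hα₄.ne' G zG p
        rw [show encode α₁ α₂ α₃ α₄ β₁ β₂ (ΔE.hadamard (theta E)) (ΔF.hadamard (theta F))
          (ΔH.hadamard (theta H)) (ΔG.hadamard (theta G)) Δq Δr
            (Sum.inl (Sum.inr (Sum.inr (Sum.inr p))))
          = (α₄ • (DS m *ᵥ vecS (ΔG.hadamard (theta G)))) p from rfl, hΔG, he]
        by_cases h : G p.1.1 p.1.2 = 0 <;> simp [thetaR, h, sq_nonneg] <;> exact le_rfl
      · have : encode α₁ α₂ α₃ α₄ β₁ β₂ (ΔE.hadamard (theta E)) (ΔF.hadamard (theta F))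
            (ΔH.hadamard (theta H)) (ΔG.hadamard (theta G)) Δq Δr (Sum.inr (Sum.inl i))
            = zq i := by
          rw [show encode α₁ α₂ α₃ α₄ β₁ β₂ (ΔE.hadamard (theta E)) (ΔF.hadamard (theta F))
            (ΔH.hadamard (theta H)) (ΔG.hadamard (theta G)) Δq Δr (Sum.inr (Sum.inl i))
            = (β₁ • Δq) i from rfl, hΔq, smul_smul, mul_inv_cancel₀ hβ₁.ne', one_smul]
        rw [this]
      · have : encode α₁ α₂ α₃ α₄ β₁ β₂ (ΔE.hadamard (theta E)) (ΔF.hadamard (theta F))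
            (ΔH.hadamard (theta H)) (ΔG.hadamard (theta G)) Δq Δr (Sum.inr (Sum.inr i))
            = zr i := by
          rw [show encode α₁ α₂ α₃ α₄ β₁ β₂ (ΔE.hadamard (theta E)) (ΔF.hadamard (theta F))
            (ΔH.hadamard (theta H)) (ΔG.hadamard (theta G)) Δq Δr (Sum.inr (Sum.inr i))
            = (β₂ • Δr) i from rfl, hΔr, smul_smul, mul_inv_cancel₀ hβ₂.ne', one_smul]
        rw [this]
  · -- lower bound
    rintro t ⟨ΔE, ΔF, ΔH, ΔG, Δq, Δr, hΔE, hΔG, hc1, hc2, ht⟩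
    have hx' : M *ᵥ encode α₁ α₂ α₃ α₄ β₁ β₂ (ΔE.hadamard (theta E)) (ΔF.hadamard (theta F))
        (ΔH.hadamard (theta H)) (ΔG.hadamard (theta G)) Δq Δr = w := by
      rw [hMdef, mulVec_encode hE F H hG uh ph hα₁.ne' hα₂.ne' hα₃.ne' hα₄.ne' hβ₁.ne' hβ₂.ne'
        (hadamard_isSymm hΔE (theta_isSymm hE)) (hadamard_theta_idem ΔE E)
        (hadamard_theta_idem ΔF F) (hadamard_theta_idem ΔH H)
        (hadamard_isSymm hΔG (theta_isSymm hG)) (hadamard_theta_idem ΔG G) Δq Δr, hwdef]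
      rw [(constraint_iff₁ E (ΔE.hadamard (theta E)) F (ΔF.hadamard (theta F))
        q Δq uh ph).mp hc1,
        (constraint_iff₂ H (ΔH.hadamard (theta H)) G (ΔG.hadamard (theta G))
        r Δr uh ph).mp hc2]
    have hle := hmin _ hx'
    rw [ht, ← eunorm_encode α₁ α₂ α₃ α₄ β₁ β₂ (hadamard_isSymm hΔE (theta_isSymm hE))
      (ΔF.hadamard (theta F)) (ΔH.hadamard (theta H))
      (hadamard_isSymm hΔG (theta_isSymm hG)) Δq Δr]
    exact hle

end GSPPBE
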